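/- Let K be a perfect field with algebraic closure K̄ and let K'/K be a finite extension inside K̄. Let G be a finite group such that for every natural number n the direct power Gⁿ is realisable as a Galois group over K (i.e., there is a finite Galois extension of K with Galois group isomorphic to Gⁿ). Then for every natural number m, the group Gᵐ is realisable as a Galois group over K'. -/

import Mathlib

open Subgroup

/-- Multiplicative version of `Equiv.piFinSucc`. -/
def mulPiFinSucc (n : ℕ) (G : Type*) [Monoid G] : (Fin (n + 1) → G) ≃* G × (Fin n → G) :=
  { (Fin.consEquiv fun _ : Fin (n + 1) => G).symm with map_mul' := fun _ _ => rfl }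

lemma grp_aux (G : Type*) [Group G] [Finite G] :
    ∀ (n : ℕ) (H : Subgroup (Fin n → G)), ∃ (m : ℕ) (f : H →* (Fin m → G)),
      Function.Surjective f ∧ 2 ^ (n - m) ≤ H.index ∧ m ≤ n := by
  intro n
  induction n with
  | zero =>
    intro H
    refine ⟨0, 1, fun g => ⟨1, Subsingleton.elim _ _⟩, ?_, le_rfl⟩
    simpa using Nat.one_le_iff_ne_zero.mpr (Subgroup.index_ne_zero_of_finite (H := H))
  | succ n ih =>
    intro H
    set e := mulPiFinSucc n G with he
    set H' := H.map e.toMonoidHom with hH'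
    have hidx : H'.index = H.index := by
      refine Subgroup.index_map_eq H e.surjective ?_
      exact le_of_eq_of_le (e.toMonoidHom.ker_eq_bot_iff.mpr e.injective) bot_le
    set A : Subgroup (Fin n → G) := H'.map (MonoidHom.snd G _) with hA
    obtain ⟨m, f₂, hf₂, hAidx, hmn⟩ := ih A
    have hPA : (⊤ : Subgroup G).prod A = A.comap (MonoidHom.snd G _) := by
      ext x; simp [Subgroup.mem_prod]
    have hPidx : ((⊤ : Subgroup G).prod A).index = A.index := by
      rw [hPA]; exact A.index_comap_of_surjective Prod.snd_surjective
    have hH'P : H' ≤ (⊤ : Subgroup G).prod A := by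
      intro x hx
      exact Subgroup.mem_prod.mpr ⟨trivial, ⟨x, hx, rfl⟩⟩
    -- the surjection H' →* A
    have hrange : ((MonoidHom.snd G _).comp H'.subtype).range = A := by
      rw [MonoidHom.range_comp, H'.range_subtype]
    let ψ : H' →* A :=
      (MulEquiv.subgroupCongr hrange).toMonoidHom.comp
        ((MonoidHom.snd G _).comp H'.subtype).rangeRestrict
    have hψ : Function.Surjective ψ :=
      (MulEquiv.subgroupCongr hrange).surjective.comp
        ((MonoidHom.snd G _).comp H'.subtype).rangeRestrict_surjective
    set D : Subgroup G := H'.comap (MonoidHom.inl G (Fin n → G)) with hD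
    by_cases hDtop : D = ⊤
    · -- H' = ⊤.prod A
      have hEq : H' = (⊤ : Subgroup G).prod A := by
        refine le_antisymm hH'P ?_
        rintro ⟨g, x⟩ hx
        obtain ⟨⟨g', x'⟩, hy, (hx2 : x' = x)⟩ :=
          Subgroup.mem_map.mp (Subgroup.mem_prod.mp hx).2
        subst hx2
        have h1 : ((g * g'⁻¹, 1) : G × (Fin n → G)) ∈ H' := by
          have := hDtop ▸ (Subgroup.mem_top (g * g'⁻¹)); exact this
        have := mul_mem h1 hy
        simpa using this
      refine ⟨m + 1, ?_, ?_, ?_, by omega⟩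
      · exact ((mulPiFinSucc m G).symm.toMonoidHom.comp
          ((MonoidHom.id G).prodMap f₂)).comp
          (((Subgroup.prodEquiv ⊤ A).trans
            ((Subgroup.topEquiv).prodCongr (MulEquiv.refl A))).toMonoidHom.comp
            ((MulEquiv.subgroupCongr hEq).toMonoidHom.comp
              (e.subgroupMap H).toMonoidHom))
      · refine (mulPiFinSucc m G).symm.surjective.comp ?_
        refine (Function.Surjective.prodMap (fun x => ⟨x, rfl⟩) hf₂).comp ?_
        exact (((Subgroup.prodEquiv ⊤ A).trans
          ((Subgroup.topEquiv).prodCongr (MulEquiv.refl A))).surjective.comp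
          ((MulEquiv.subgroupCongr hEq).surjective.comp (e.subgroupMap H).surjective))
      · have : H'.index = A.index := by rw [hEq, hPidx]
        rw [← hidx, this]
        have : n + 1 - (m + 1) = n - m := by omega
        rw [this]; exact hAidx
    · -- proper case
      have hProper : H' ≠ (⊤ : Subgroup G).prod A := by
        intro hEq
        apply hDtop
        rw [eq_top_iff]
        intro g _
        show (g, 1) ∈ H'
        rw [hEq]
        exact Subgroup.mem_prod.mpr ⟨trivial, one_mem A⟩
      have hrel2 : 2 ≤ H'.relIndex ((⊤ : Subgroup G).prod A) := by
        have h0 : H'.relIndex ((⊤ : Subgroup G).prod A) ≠ 0 :=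
          Subgroup.index_ne_zero_of_finite
        have h1 : H'.relIndex ((⊤ : Subgroup G).prod A) ≠ 1 := by
          rw [Ne, Subgroup.relIndex_eq_one]
          exact fun hle => hProper (le_antisymm hH'P hle)
        omega
      refine ⟨m, (f₂.comp ψ).comp (e.subgroupMap H).toMonoidHom,
        (hf₂.comp hψ).comp (e.subgroupMap H).surjective, ?_, by omega⟩
      rw [← hidx, ← Subgroup.relIndex_mul_index hH'P, hPidx]
      have : n + 1 - m = (n - m) + 1 := by omega
      rw [this, pow_succ, mul_comm (2 ^ (n-m)) 2]
      exact Nat.mul_le_mul hrel2 hAidx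

lemma grp_main (G : Type*) [Group G] [Finite G] (d m : ℕ)
    (H : Subgroup (Fin (m + d) → G)) (hH : H.index ≤ d) :
    ∃ f : H →* (Fin m → G), Function.Surjective f := by
  obtain ⟨m', f, hf, hpow, hmn⟩ := grp_aux G (m + d) H
  have hk : m + d - m' < 2 ^ (m + d - m') := Nat.lt_two_pow_self
  have hm : m ≤ m' := by omega
  let p : (Fin m' → G) →* (Fin m → G) :=
    { toFun := fun f i => f (Fin.castLE hm i)
      map_one' := rfl
      map_mul' := fun _ _ => rfl }
  have hp : Function.Surjective p := by
    intro g
    refine ⟨fun j => if h : (j : ℕ) < m then g ⟨j, h⟩ else 1, ?_⟩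
    funext i
    simp [p, i.isLt]
  exact ⟨p.comp f, hp.comp hf⟩

open IntermediateField Polynomial Module

set_option synthInstance.maxHeartbeats 1000000
set_option maxHeartbeats 4000000

/-- Let `K` be a perfect field with algebraic closure `K̄` and `K'/K` a finite
extension inside `K̄`. Let `G` be a finite group such that for every `n` the direct power `Gⁿ`
is realisable as a Galois group over `K`. Then for every `m`, the group `Gᵐ` is realisable as
a Galois group over `K'`. -/
theorem stmt_3 (K : Type*) [Field K] [PerfectField K]
    (K' : IntermediateField K (AlgebraicClosure K)) [FiniteDimensional K ↥K']
    (G : Type*) [Group G] [Finite G]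
    (hK : ∀ n : ℕ, ∃ E : IntermediateField K (AlgebraicClosure K),
      FiniteDimensional K ↥E ∧ IsGalois K ↥E ∧
        Nonempty ((↥E ≃ₐ[K] ↥E) ≃* (Fin n → G))) :
    ∀ m : ℕ, ∃ E' : IntermediateField ↥K' (AlgebraicClosure K),
      FiniteDimensional ↥K' ↥E' ∧ IsGalois ↥K' ↥E' ∧
        Nonempty ((↥E' ≃ₐ[↥K'] ↥E') ≃* (Fin m → G)) := by
  intro m
  set L := AlgebraicClosure K
  set d := finrank K ↥K' with hd
  obtain ⟨E, hEfd, hEgal, ⟨iso⟩⟩ := hK (m + d)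
  haveI : Normal K ↥E := hEgal.to_normal
  obtain ⟨p, hpE⟩ := Normal.exists_isSplittingField K ↥E
  have hEeq : E = adjoin K (p.rootSet L) := (isSplittingField_iff.mp hpE).2
  set q : Polynomial ↥K' := p.map (algebraMap K ↥K') with hqdef
  have hqsplit : (q.map (algebraMap ↥K' L)).Splits := IsAlgClosed.splits _
  set E' : IntermediateField ↥K' L := adjoin ↥K' (q.rootSet L) with hE'def
  have hsf : q.IsSplittingField ↥K' ↥E' := adjoin_rootSet_isSplittingField hqsplit
  haveI : FiniteDimensional ↥K' ↥E' := IsSplittingField.finiteDimensional ↥E' q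
  haveI : Normal ↥K' ↥E' := Normal.of_isSplittingField q
  haveI : Algebra.IsSeparable ↥K' L := Algebra.isSeparable_tower_top_of_isSeparable K ↥K' L
  haveI : Algebra.IsSeparable ↥K' ↥E' := Algebra.isSeparable_tower_bot_of_isSeparable ↥K' ↥E' L
  haveI hE'gal : IsGalois ↥K' ↥E' := ⟨⟩
  -- roots of q and p agree in L
  have hq : q.rootSet L = p.rootSet L := by
    simp only [Polynomial.rootSet, hqdef, Polynomial.aroots_def, Polynomial.map_map,
      ← IsScalarTower.algebraMap_eq K ↥K' L]
  have hroots_sub_E : q.rootSet L ⊆ (E : Set L) := by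
    rw [hq, hEeq]; exact subset_adjoin K _
  -- E ≤ E' (as K-intermediate fields)
  have hEle : E ≤ IntermediateField.restrictScalars K E' := by
    rw [hE'def, restrictScalars_adjoin_eq_sup, hq, hEeq]
    exact le_sup_right
  have hsub : ∀ x : ↥E, (x : L) ∈ E' := fun x => hEle x.2
  -- the inclusion E →ₐ[K] E'
  let j : ↥E →ₐ[K] ↥E' :=
    { toFun := fun x => ⟨x, hsub x⟩
      map_one' := rfl
      map_mul' := fun _ _ => rfl
      map_zero' := rfl
      map_add' := fun _ _ => rfl
      commutes' := fun x => Subtype.ext <| by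
        show algebraMap K L x = _
        rw [IsScalarTower.algebraMap_apply K ↥K' L x]
        rfl }
  letI : Algebra ↥E ↥E' := j.toRingHom.toAlgebra
  haveI : IsScalarTower K ↥E ↥E' := IsScalarTower.of_algebraMap_eq fun x => Subtype.ext <| by
    show _ = algebraMap K L x
    rw [IsScalarTower.algebraMap_apply K ↥K' L x]
    rfl
  -- restriction homomorphism
  let r : (↥E' ≃ₐ[↥K'] ↥E') →* (↥E ≃ₐ[K] ↥E) :=
    (AlgEquiv.restrictNormalHom (↥E)).comp
      (MonoidHom.mk' (fun σ => σ.restrictScalars K) fun _ _ => rfl)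
  have hrcomm : ∀ (σ : ↥E' ≃ₐ[↥K'] ↥E') (x : ↥E), j (r σ x) = σ (j x) := fun σ x =>
    AlgEquiv.restrictNormal_commutes (σ.restrictScalars K) (↥E) x
  have hrinj : Function.Injective r := by
    refine (injective_iff_map_eq_one r).mpr fun σ hσ => ?_
    have hfix : ∀ x : ↥E', (x : L) ∈ E → σ x = x := by
      intro x hx
      have hxj : x = j ⟨(x : L), hx⟩ := Subtype.ext rfl
      rw [hxj, ← hrcomm σ, hσ]
      rfl
    have htop : Algebra.adjoin ↥K' (q.rootSet ↥E') ≤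
        AlgHom.equalizer (σ : ↥E' →ₐ[↥K'] ↥E') (AlgHom.id ↥K' ↥E') := by
      refine Algebra.adjoin_le fun u hu => ?_
      have huL : (u : L) ∈ q.rootSet L := by
        rw [mem_rootSet] at hu ⊢
        refine ⟨hu.1, ?_⟩
        have := Polynomial.aeval_algebraMap_apply L u q
        rw [hu.2, map_zero] at this
        exact this
      exact hfix u (hroots_sub_E huL)
    have heq : (⊤ : Subalgebra ↥K' ↥E') ≤
        AlgHom.equalizer (σ : ↥E' →ₐ[↥K'] ↥E') (AlgHom.id ↥K' ↥E') := by
      rw [← hsf.adjoin_rootSet']; exact htop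
    exact AlgEquiv.ext fun x => heq (Algebra.mem_top (R := ↥K') (x := x))
  -- index bound
  haveI : FiniteDimensional K ↥E' := FiniteDimensional.trans K ↥K' ↥E'
  have hfr : finrank K ↥E ≤ d * finrank ↥K' ↥E' := by
    have h1 : finrank K ↥E ≤ finrank K ↥E' :=
      LinearMap.finrank_le_finrank_of_injective (f := j.toLinearMap)
        (show Function.Injective j from j.toRingHom.injective)
    have h2 : d * finrank ↥K' ↥E' = finrank K ↥E' := finrank_mul_finrank K ↥K' ↥E'
    omega
  have hcardE : Nat.card (↥E ≃ₐ[K] ↥E) = finrank K ↥E := by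
    exact IsGalois.card_aut_eq_finrank K ↥E
  have hcardE' : Nat.card (↥E' ≃ₐ[↥K'] ↥E') = finrank ↥K' ↥E' := by
    exact IsGalois.card_aut_eq_finrank ↥K' ↥E'
  have hcard_range : Nat.card r.range = finrank ↥K' ↥E' := by
    rw [← hcardE', Nat.card_congr (MonoidHom.ofInjective hrinj).toEquiv.symm]
  have hidx : r.range.index ≤ d := by
    have h1 : r.range.index * Nat.card r.range = Nat.card (↥E ≃ₐ[K] ↥E) :=
      r.range.index_mul_card
    have h2 : 0 < finrank ↥K' ↥E' := finrank_pos
    rw [hcard_range, hcardE] at h1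
    nlinarith [hfr, h2, h1]
  -- transfer to G-side and apply group lemma
  set Hr := r.range.map iso.toMonoidHom with hHr
  have hHidx : Hr.index ≤ d := by
    have : Hr.index = r.range.index := by
      refine Subgroup.index_map_eq _ iso.surjective ?_
      exact le_of_eq_of_le (iso.toMonoidHom.ker_eq_bot_iff.mpr iso.injective) bot_le
    omega
  obtain ⟨f, hf⟩ := grp_main G d m Hr hHidx
  let φ : (↥E' ≃ₐ[↥K'] ↥E') →* (Fin m → G) :=
    (f.comp (iso.subgroupMap r.range).toMonoidHom).comp
      (MonoidHom.ofInjective hrinj).toMonoidHom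
  have hφ : Function.Surjective φ :=
    (hf.comp (iso.subgroupMap r.range).surjective).comp
      (MonoidHom.ofInjective hrinj).surjective
  -- take the fixed field of the kernel
  set N := φ.ker with hN
  set E'' : IntermediateField ↥K' ↥E' := IntermediateField.fixedField N with hE''
  haveI : IsGalois ↥K' ↥E'' := IsGalois.of_fixedField_normal_subgroup N
  have galiso : ((↥E'' ≃ₐ[↥K'] ↥E'') ≃* (Fin m → G)) :=
    ((IsGalois.normalAutEquivQuotient N).symm.trans
      (QuotientGroup.quotientKerEquivOfSurjective φ hφ))
  -- push E'' into L
  refine ⟨E''.map E'.val, ?_, ?_, ?_⟩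
  · exact Module.Finite.equiv (IntermediateField.equivMap E'' E'.val).toLinearEquiv
  · exact IsGalois.of_algEquiv (IntermediateField.equivMap E'' E'.val)
  · exact ⟨(AlgEquiv.autCongr (IntermediateField.equivMap E'' E'.val)).symm.trans galiso⟩
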